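/- arXiv:2501.12867 — 4 statements merged into one kernel-verified Lean document; each statement's English description precedes it below -/
import Mathlib

section
/- Let μ be a probability measure on ℝ^d, let V ∈ St(d,r) and W ∈ St(d,d−r) satisfy V Vᵀ + W Wᵀ = I_d, and let f : ℝ^d → ℝ be continuously differentiable with f and ‖∇f‖ square-integrable with respect to μ. Let μ_V be the pushforward of μ under y ↦ Vᵀy and let (μ_{Z|X}(·|x))_{x} be a disintegration (conditional distribution) of the pushforward of μ under y ↦ (Vᵀy, Wᵀy) with respect to its first marginal. Suppose there is a constant C_P > 0 such that for μ_V-a.e. x and every continuously differentiable h : ℝ^{d−r} → ℝ with h and ‖∇h‖ square-integrable against μ_{Z|X}(·|x) and ∫ h dμ_{Z|X}(·|x) = 0, one has (∫ h(z)² dμ_{Z|X}(dz|x))^{1/2} ≤ C_P (∫ ‖∇h(z)‖² dμ_{Z|X}(dz|x))^{1/2}. Define g⋆(x) := ∫ f(Vx + Wz) μ_{Z|X}(dz|x). Then ‖f − g⋆ ∘ (Vᵀ·)‖_{L²(μ)} ≤ C_P ‖(I_d − V Vᵀ)∇f‖_{L²(μ;ℝ^d)}. -/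
open MeasureTheory ProbabilityTheory Matrix
open scoped ProbabilityTheory

noncomputable section

/-- The gradient of `f : ℝ^d → ℝ` at `y`, as the vector of partial derivatives. -/
def grad {d : ℕ} (f : (Fin d → ℝ) → ℝ) (y : Fin d → ℝ) : Fin d → ℝ :=
  fun i => fderiv ℝ f y (Pi.single i 1)

/-- Squared Euclidean norm on `ℝ^d`. -/
def sqnorm {d : ℕ} (v : Fin d → ℝ) : ℝ := ∑ i, v i ^ 2

/-! ### Auxiliary lemmas -/

lemma sqnorm_eq_dot {d : ℕ} (v : Fin d → ℝ) : sqnorm v = v ⬝ᵥ v := by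
  simp [sqnorm, dotProduct, sq]

lemma sqnorm_nonneg' {d : ℕ} (v : Fin d → ℝ) : 0 ≤ sqnorm v :=
  Finset.sum_nonneg fun _ _ => sq_nonneg _

lemma continuous_mulVec' {m n : ℕ} (M : Matrix (Fin m) (Fin n) ℝ) :
    Continuous (fun v => M.mulVec v) := by
  have := LinearMap.continuous_of_finiteDimensional (M.mulVecLin)
  exact continuous_const.matrix_mulVec continuous_id

lemma continuous_sqnorm' {d : ℕ} : Continuous (sqnorm (d := d)) := by
  apply continuous_finset_sum
  exact fun i _ => (continuous_apply i).pow 2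

lemma clm_apply_eq_sum {d : ℕ} (φ : (Fin d → ℝ) →L[ℝ] ℝ) (v : Fin d → ℝ) :
    φ v = ∑ j, v j * φ (Pi.single j 1) := by
  have hv : v = ∑ j, (v j) • (Pi.single j 1 : Fin d → ℝ) := by
    ext i
    simp [Finset.sum_apply, Pi.single_apply]
  conv_lhs => rw [hv]
  rw [map_sum]
  simp [smul_eq_mul]

lemma grad_comp_affine {d s : ℕ} (f : (Fin d → ℝ) → ℝ) (hf : ContDiff ℝ 1 f)
    (c : Fin d → ℝ) (W : Matrix (Fin d) (Fin s) ℝ) (z : Fin s → ℝ) :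
    grad (fun z => f (c + W.mulVec z)) z = Wᵀ.mulVec (grad f (c + W.mulVec z)) := by
  set y := c + W.mulVec z with hy
  set L : (Fin s → ℝ) →L[ℝ] (Fin d → ℝ) := LinearMap.toContinuousLinearMap W.mulVecLin with hL
  have hLa : ∀ u, L u = W.mulVec u := fun u => rfl
  have hinner : HasFDerivAt (fun z => c + W.mulVec z) L z := by
    have := (L.hasFDerivAt (x := z)).const_add c
    simpa [hLa] using this
  have hfd : HasFDerivAt f (fderiv ℝ f y) y :=
    ((hf.differentiable one_ne_zero) y).hasFDerivAt
  have hcomp : HasFDerivAt (fun z => f (c + W.mulVec z)) ((fderiv ℝ f y).comp L) z :=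
    hfd.comp z hinner
  funext i
  show fderiv ℝ (fun z => f (c + W.mulVec z)) z (Pi.single i 1) = _
  rw [hcomp.fderiv]
  show (fderiv ℝ f y) (L (Pi.single i 1)) = _
  rw [hLa, Matrix.mulVec_single_one]
  rw [clm_apply_eq_sum (fderiv ℝ f y) (W.col i)]
  simp [Matrix.mulVec, dotProduct, grad]

lemma dot_mulVec_self {d s : ℕ} {W : Matrix (Fin d) (Fin s) ℝ} (hW : Wᵀ * W = 1)
    (u : Fin s → ℝ) : (W.mulVec u) ⬝ᵥ (W.mulVec u) = u ⬝ᵥ u := by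
  rw [Matrix.dotProduct_mulVec, ← Matrix.mulVec_transpose, Matrix.mulVec_mulVec, hW,
    Matrix.one_mulVec]

lemma sqnorm_proj {d r s : ℕ} {V : Matrix (Fin d) (Fin r) ℝ} {W : Matrix (Fin d) (Fin s) ℝ}
    (hW : Wᵀ * W = 1) (hVW : V * Vᵀ + W * Wᵀ = 1) (v : Fin d → ℝ) :
    sqnorm (((1 : Matrix (Fin d) (Fin d) ℝ) - V * Vᵀ).mulVec v) = sqnorm (Wᵀ.mulVec v) := by
  have h1 : (1 : Matrix (Fin d) (Fin d) ℝ) - V * Vᵀ = W * Wᵀ := by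
    rw [← hVW]; abel
  rw [h1, sqnorm_eq_dot, sqnorm_eq_dot, ← Matrix.mulVec_mulVec, dot_mulVec_self hW]

lemma sqnorm_split {d r s : ℕ} {V : Matrix (Fin d) (Fin r) ℝ} {W : Matrix (Fin d) (Fin s) ℝ}
    (hVW : V * Vᵀ + W * Wᵀ = 1) (v : Fin d → ℝ) :
    sqnorm v = sqnorm (Vᵀ.mulVec v) + sqnorm (Wᵀ.mulVec v) := by
  have key : ∀ (k : ℕ) (M : Matrix (Fin d) (Fin k) ℝ),
      sqnorm (Mᵀ.mulVec v) = v ⬝ᵥ ((M * Mᵀ).mulVec v) := by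
    intro k M
    rw [sqnorm_eq_dot, ← Matrix.mulVec_mulVec, Matrix.dotProduct_mulVec v,
      ← Matrix.mulVec_transpose]
  rw [key r V, key s W, sqnorm_eq_dot, ← dotProduct_add, ← Matrix.add_mulVec, hVW,
    Matrix.one_mulVec]

lemma sqnorm_WT_le {d r s : ℕ} {V : Matrix (Fin d) (Fin r) ℝ} {W : Matrix (Fin d) (Fin s) ℝ}
    (hVW : V * Vᵀ + W * Wᵀ = 1) (v : Fin d → ℝ) :
    sqnorm (Wᵀ.mulVec v) ≤ sqnorm v := by
  rw [sqnorm_split hVW v]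
  have := sqnorm_nonneg' (Vᵀ.mulVec v)
  linarith

lemma recon {d r s : ℕ} {V : Matrix (Fin d) (Fin r) ℝ} {W : Matrix (Fin d) (Fin s) ℝ}
    (hVW : V * Vᵀ + W * Wᵀ = 1) (y : Fin d → ℝ) :
    V.mulVec (Vᵀ.mulVec y) + W.mulVec (Wᵀ.mulVec y) = y := by
  rw [Matrix.mulVec_mulVec, Matrix.mulVec_mulVec, ← Matrix.add_mulVec, hVW, Matrix.one_mulVec]

/-- the active subspace (sliced Poincaré) error bound
`‖f − g⋆ ∘ (Vᵀ·)‖_{L²(μ)} ≤ C_P ‖(I − V Vᵀ)∇f‖_{L²(μ;ℝ^d)}`. -/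
theorem active_subspace_error_bound
    {d r s : ℕ} (μ : Measure (Fin d → ℝ)) [IsProbabilityMeasure μ]
    (V : Matrix (Fin d) (Fin r) ℝ) (W : Matrix (Fin d) (Fin s) ℝ)
    (hV : Vᵀ * V = 1) (hW : Wᵀ * W = 1)
    (hVW : V * Vᵀ + W * Wᵀ = 1)
    (f : (Fin d → ℝ) → ℝ) (hf : ContDiff ℝ 1 f)
    (hfL2 : MemLp f 2 μ)
    (hgradL2 : Integrable (fun y => sqnorm (grad f y)) μ)
    -- disintegration of the pushforward of μ under y ↦ (Vᵀy, Wᵀy) w.r.t. its first marginal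
    (κ : Kernel (Fin r → ℝ) (Fin s → ℝ)) [IsMarkovKernel κ]
    (hdis : μ.map (fun y => (Vᵀ.mulVec y, Wᵀ.mulVec y)) = (μ.map (Vᵀ.mulVec ·)) ⊗ₘ κ)
    -- the sliced Poincaré inequality with constant C_P
    (CP : ℝ) (hCP : 0 < CP)
    (hPoincare : ∀ᵐ x ∂(μ.map (Vᵀ.mulVec ·)), ∀ h : (Fin s → ℝ) → ℝ,
      ContDiff ℝ 1 h → MemLp h 2 (κ x) →
      Integrable (fun z => sqnorm (grad h z)) (κ x) →
      (∫ z, h z ∂(κ x)) = 0 →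
      Real.sqrt (∫ z, (h z) ^ 2 ∂(κ x)) ≤
        CP * Real.sqrt (∫ z, sqnorm (grad h z) ∂(κ x)))
    -- the conditional average g⋆
    (gstar : (Fin r → ℝ) → ℝ)
    (hgstar : ∀ x, gstar x = ∫ z, f (V.mulVec x + W.mulVec z) ∂(κ x)) :
    Real.sqrt (∫ y, (f y - gstar (Vᵀ.mulVec y)) ^ 2 ∂μ) ≤
      CP * Real.sqrt (∫ y, sqnorm (((1 : Matrix (Fin d) (Fin d) ℝ) - V * Vᵀ).mulVec (grad f y)) ∂μ) := by
  classical
  -- setup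
  set μV := μ.map (Vᵀ.mulVec ·) with hμV
  have hTV : Measurable (fun y => Vᵀ.mulVec y) := (continuous_mulVec' _).measurable
  have hTW : Measurable (fun y => Wᵀ.mulVec y) := (continuous_mulVec' _).measurable
  set T : (Fin d → ℝ) → (Fin r → ℝ) × (Fin s → ℝ) := fun y => (Vᵀ.mulVec y, Wᵀ.mulVec y)
    with hTdef
  have hTmeas : Measurable T := hTV.prodMk hTW
  haveI : IsProbabilityMeasure μV := Measure.isProbabilityMeasure_map hTV.aemeasurable
  set F : (Fin r → ℝ) × (Fin s → ℝ) → ℝ := fun p => f (V.mulVec p.1 + W.mulVec p.2) with hFdef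
  have hfc : Continuous f := hf.continuous
  have haff : Continuous (fun p : (Fin r → ℝ) × (Fin s → ℝ) => V.mulVec p.1 + W.mulVec p.2) :=
    ((continuous_mulVec' V).comp continuous_fst).add ((continuous_mulVec' W).comp continuous_snd)
  have hFc : Continuous F := hfc.comp haff
  have hFT : ∀ y, F (T y) = f y := fun y => by
    simp only [hFdef, hTdef]
    rw [recon hVW]
  -- gstar is strongly measurable
  have hgstar' : gstar = fun x => ∫ z, F (x, z) ∂(κ x) := funext fun x => hgstar x
  have hgsm : StronglyMeasurable gstar := by
    rw [hgstar']
    exact hFc.stronglyMeasurable.integral_kernel_prod_right'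
  -- the gradient is measurable
  have hgradm : Measurable (grad f) :=
    measurable_pi_lambda _ fun i => measurable_fderiv_apply_const ℝ f _
  set G : (Fin d → ℝ) → ℝ := fun y => sqnorm (Wᵀ.mulVec (grad f y)) with hGdef
  have hGmeas : Measurable G :=
    (continuous_sqnorm'.comp (continuous_mulVec' Wᵀ)).measurable.comp hgradm
  have hGint : Integrable G μ := by
    refine hgradL2.mono' hGmeas.aestronglyMeasurable ?_
    filter_upwards with y
    rw [Real.norm_of_nonneg (sqnorm_nonneg' _)]
    exact sqnorm_WT_le hVW _
  have hGnonneg : ∀ y, 0 ≤ G y := fun y => sqnorm_nonneg' _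
  set ν := μV ⊗ₘ κ with hνdef
  have hν : μ.map T = ν := hdis
  set G' : (Fin r → ℝ) × (Fin s → ℝ) → ℝ := fun p => G (V.mulVec p.1 + W.mulVec p.2) with hG'def
  have hG'meas : Measurable G' := hGmeas.comp haff.measurable
  have hG'T : ∀ y, G' (T y) = G y := fun y => by
    simp only [hG'def, hTdef]
    rw [recon hVW]
  have hG'int : Integrable G' ν := by
    rw [← hν, integrable_map_measure hG'meas.aestronglyMeasurable hTmeas.aemeasurable]
    have : G' ∘ T = G := funext hG'T
    rw [this]
    exact hGint
  have hFν : MemLp F 2 ν := by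
    rw [← hν, memLp_map_measure_iff hFc.aestronglyMeasurable hTmeas.aemeasurable]
    have : F ∘ T = f := funext hFT
    rw [this]
    exact hfL2
  have hFsq : Integrable (fun p => F p ^ 2) ν := hFν.integrable_sq
  -- a.e. slice facts
  have hsl1 : ∀ᵐ x ∂μV, Integrable (fun z => F (x, z) ^ 2) (κ x) :=
    ((Measure.integrable_compProd_iff hFsq.aestronglyMeasurable).mp hFsq).1
  have hsl3 : ∀ᵐ x ∂μV, Integrable (fun z => G' (x, z)) (κ x) :=
    ((Measure.integrable_compProd_iff hG'int.aestronglyMeasurable).mp hG'int).1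
  -- the key a.e. lintegral inequality on slices
  have hkey : ∀ᵐ x ∂μV,
      ∫⁻ z, ENNReal.ofReal ((F (x, z) - gstar x) ^ 2) ∂(κ x) ≤
        ENNReal.ofReal (CP ^ 2) * ∫⁻ z, ENNReal.ofReal (G' (x, z)) ∂(κ x) := by
    filter_upwards [hsl1, hsl3, hPoincare] with x h1 h3 hP
    -- the test function
    set h : (Fin s → ℝ) → ℝ := fun z => F (x, z) - gstar x with hhdef
    have hhc : ContDiff ℝ 1 h := by
      have haffc : ContDiff ℝ 1 (fun z : Fin s → ℝ => f (V.mulVec x + W.mulVec z)) := by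
        apply hf.comp
        have : ContDiff ℝ 1 (fun z : Fin s → ℝ =>
            V.mulVec x + (Matrix.mulVecLin W).toContinuousLinearMap z) :=
          contDiff_const.add (Matrix.mulVecLin W).toContinuousLinearMap.contDiff
        exact this
      exact haffc.sub contDiff_const
    have hFxm : AEStronglyMeasurable (fun z => F (x, z)) (κ x) :=
      (hFc.comp (Continuous.prodMk_right x)).aestronglyMeasurable
    have hFx2 : MemLp (fun z => F (x, z)) 2 (κ x) :=
      (memLp_two_iff_integrable_sq hFxm).mpr h1
    have hhmem : MemLp h 2 (κ x) := hFx2.sub (memLp_const _)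
    have hFxint : Integrable (fun z => F (x, z)) (κ x) := hFx2.integrable one_le_two
    -- gradient of h
    have hgradh : ∀ z, grad h z = Wᵀ.mulVec (grad f (V.mulVec x + W.mulVec z)) := by
      intro z
      have e1 : grad h z = grad (fun z => F (x, z)) z := by
        funext i
        show fderiv ℝ (fun z => F (x, z) - gstar x) z (Pi.single i 1) = _
        rw [fderiv_sub_const]
        rfl
      rw [e1]
      exact grad_comp_affine f hf (V.mulVec x) W z
    have hsqgradh : (fun z => sqnorm (grad h z)) = fun z => G' (x, z) := by
      funext z
      rw [hgradh z]
    have hhgradint : Integrable (fun z => sqnorm (grad h z)) (κ x) := by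
      rw [hsqgradh]; exact h3
    have hhmean : (∫ z, h z ∂(κ x)) = 0 := by
      rw [hhdef]
      rw [integral_sub hFxint (integrable_const _), integral_const]
      simp only [probReal_univ, one_smul]
      rw [hgstar x]
      exact sub_self _
    have hsqrt := hP h hhc hhmem hhgradint hhmean
    -- square the inequality
    have ha : 0 ≤ ∫ z, h z ^ 2 ∂(κ x) := integral_nonneg fun z => sq_nonneg _
    have hb : 0 ≤ ∫ z, sqnorm (grad h z) ∂(κ x) :=
      integral_nonneg fun z => sqnorm_nonneg' _
    have hsq : ∫ z, h z ^ 2 ∂(κ x) ≤ CP ^ 2 * ∫ z, sqnorm (grad h z) ∂(κ x) := by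
      have e1 : ∫ z, h z ^ 2 ∂(κ x) = (Real.sqrt (∫ z, h z ^ 2 ∂(κ x))) ^ 2 :=
        (Real.sq_sqrt ha).symm
      have e2 : (CP * Real.sqrt (∫ z, sqnorm (grad h z) ∂(κ x))) ^ 2 =
          CP ^ 2 * ∫ z, sqnorm (grad h z) ∂(κ x) := by
        rw [mul_pow, Real.sq_sqrt hb]
      rw [e1, ← e2]
      exact pow_le_pow_left₀ (Real.sqrt_nonneg _) hsqrt 2
    -- pass to lintegrals
    have hh2int : Integrable (fun z => h z ^ 2) (κ x) := hhmem.integrable_sq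
    have eL : ∫⁻ z, ENNReal.ofReal ((F (x, z) - gstar x) ^ 2) ∂(κ x) =
        ENNReal.ofReal (∫ z, h z ^ 2 ∂(κ x)) := by
      rw [ofReal_integral_eq_lintegral_ofReal hh2int
        (Filter.Eventually.of_forall fun z => sq_nonneg _)]
    have eR : ∫⁻ z, ENNReal.ofReal (G' (x, z)) ∂(κ x) =
        ENNReal.ofReal (∫ z, G' (x, z) ∂(κ x)) := by
      rw [ofReal_integral_eq_lintegral_ofReal h3
        (Filter.Eventually.of_forall fun z => sqnorm_nonneg' _)]
    rw [eL, eR, ← ENNReal.ofReal_mul (by positivity)]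
    apply ENNReal.ofReal_le_ofReal
    calc ∫ z, h z ^ 2 ∂(κ x) ≤ CP ^ 2 * ∫ z, sqnorm (grad h z) ∂(κ x) := hsq
      _ = CP ^ 2 * ∫ z, G' (x, z) ∂(κ x) := by rw [hsqgradh]
  -- integrate over x : the main lintegral inequality
  have hmainL : ∫⁻ y, ENNReal.ofReal ((f y - gstar (Vᵀ.mulVec y)) ^ 2) ∂μ ≤
      ENNReal.ofReal (CP ^ 2) * ∫⁻ y, ENNReal.ofReal (G y) ∂μ := by
    have hφmeas : Measurable (fun p : (Fin r → ℝ) × (Fin s → ℝ) =>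
        ENNReal.ofReal ((F p - gstar p.1) ^ 2)) := by
      apply ENNReal.measurable_ofReal.comp
      exact ((hFc.measurable.sub (hgsm.measurable.comp measurable_fst)).pow_const 2)
    have hψmeas : Measurable (fun p : (Fin r → ℝ) × (Fin s → ℝ) => ENNReal.ofReal (G' p)) :=
      ENNReal.measurable_ofReal.comp hG'meas
    have e1 : ∫⁻ y, ENNReal.ofReal ((f y - gstar (Vᵀ.mulVec y)) ^ 2) ∂μ =
        ∫⁻ p, ENNReal.ofReal ((F p - gstar p.1) ^ 2) ∂ν := by
      rw [← hν, lintegral_map hφmeas hTmeas]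
      congr 1
      funext y
      rw [← hFT y]
    have e2 : ∫⁻ y, ENNReal.ofReal (G y) ∂μ = ∫⁻ p, ENNReal.ofReal (G' p) ∂ν := by
      rw [← hν, lintegral_map hψmeas hTmeas]
      congr 1
      funext y
      rw [← hG'T y]
    rw [e1, e2, Measure.lintegral_compProd hφmeas, Measure.lintegral_compProd hψmeas]
    calc ∫⁻ x, ∫⁻ z, ENNReal.ofReal ((F (x, z) - gstar x) ^ 2) ∂(κ x) ∂μV
        ≤ ∫⁻ x, ENNReal.ofReal (CP ^ 2) * ∫⁻ z, ENNReal.ofReal (G' (x, z)) ∂(κ x) ∂μV :=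
          lintegral_mono_ae hkey
      _ = ENNReal.ofReal (CP ^ 2) * ∫⁻ x, ∫⁻ z, ENNReal.ofReal (G' (x, z)) ∂(κ x) ∂μV :=
          lintegral_const_mul' _ _ ENNReal.ofReal_ne_top
  -- conclude
  have hBeq : (∫ y, sqnorm (((1 : Matrix (Fin d) (Fin d) ℝ) - V * Vᵀ).mulVec (grad f y)) ∂μ) =
      ∫ y, G y ∂μ := by
    congr 1
    funext y
    exact sqnorm_proj hW hVW _
  rw [hBeq]
  set A := ∫ y, (f y - gstar (Vᵀ.mulVec y)) ^ 2 ∂μ with hA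
  set B := ∫ y, G y ∂μ with hB
  have hBnonneg : 0 ≤ B := integral_nonneg hGnonneg
  have hAB : A ≤ CP ^ 2 * B := by
    by_cases hint : Integrable (fun y => (f y - gstar (Vᵀ.mulVec y)) ^ 2) μ
    · have eA : ENNReal.ofReal A = ∫⁻ y, ENNReal.ofReal ((f y - gstar (Vᵀ.mulVec y)) ^ 2) ∂μ :=
        ofReal_integral_eq_lintegral_ofReal hint
          (Filter.Eventually.of_forall fun y => sq_nonneg _)
      have eB : ENNReal.ofReal B = ∫⁻ y, ENNReal.ofReal (G y) ∂μ :=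
        ofReal_integral_eq_lintegral_ofReal hGint (Filter.Eventually.of_forall hGnonneg)
      have hle : ENNReal.ofReal A ≤ ENNReal.ofReal (CP ^ 2 * B) := by
        rw [eA, ENNReal.ofReal_mul (by positivity), eB]
        exact hmainL
      exact (ENNReal.ofReal_le_ofReal_iff (by positivity)).mp hle
    · rw [hA, integral_undef hint]
      positivity
  calc Real.sqrt A ≤ Real.sqrt (CP ^ 2 * B) := Real.sqrt_le_sqrt hAB
    _ = CP * Real.sqrt B := by
        rw [Real.sqrt_mul (by positivity), Real.sqrt_sq hCP.le]

end
end

section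
/- Let μ be a probability measure on a measurable space Γ and let φ_1,…,φ_m be an orthonormal system in L²(μ) such that for μ-a.e. y it holds ∑_{j=1}^m φ_j(y)² > 0. Define the measure ν⋆ by dν⋆/dμ := (1/m) ∑_{j=1}^m φ_j². Then ν⋆ is a probability measure, μ is absolutely continuous with respect to ν⋆ with w⋆ := dμ/dν⋆ = m / ∑_{j=1}^m φ_j² (ν⋆-a.e.), and the function k_{m,w⋆}(y) := w⋆(y) ∑_{j=1}^m φ_j(y)² equals m identically ν⋆-a.e.; in particular K_{m,w⋆} := ess-sup_{ν⋆} k_{m,w⋆} = m, which is the minimal possible value of K_{m,w} over all probability measures ν with μ ≪ ν. -/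
open MeasureTheory
open scoped ENNReal

noncomputable section

/-- the optimal sampling measure `dν⋆/dμ = (1/m) ∑_j φ_j²` is a
probability measure, `μ ≪ ν⋆` with `dμ/dν⋆ = m / ∑_j φ_j²`, the function
`k_{m,w⋆} = w⋆ ∑_j φ_j²` equals `m` identically `ν⋆`-a.e., hence
`K_{m,w⋆} = m`, which is the minimal possible value of `K_{m,w}` over all
probability measures `ν` with `μ ≪ ν`. -/
theorem optimal_sampling_measure
    {Γ : Type*} [MeasurableSpace Γ] (μ : Measure Γ) [IsProbabilityMeasure μ]
    {m : ℕ} (hm : 0 < m) (φ : Fin m → Γ → ℝ) (hmeas : ∀ j, Measurable (φ j))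
    (hL2 : ∀ j, MemLp (φ j) 2 μ)
    (hortho : ∀ i j, ∫ y, φ i y * φ j y ∂μ = if i = j then 1 else 0)
    (hpos : ∀ᵐ y ∂μ, 0 < ∑ j, φ j y ^ 2)
    (νstar : Measure Γ)
    (hνstar : νstar = μ.withDensity fun y => ENNReal.ofReal ((∑ j, φ j y ^ 2) / m)) :
    IsProbabilityMeasure νstar ∧
    μ ≪ νstar ∧
    (μ.rnDeriv νstar =ᵐ[νstar] fun y => ENNReal.ofReal ((m : ℝ) / ∑ j, φ j y ^ 2)) ∧
    ((fun y => (μ.rnDeriv νstar y).toReal * ∑ j, φ j y ^ 2) =ᵐ[νstar] fun _ => (m : ℝ)) ∧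
    essSup (fun y => ENNReal.ofReal ((μ.rnDeriv νstar y).toReal * ∑ j, φ j y ^ 2)) νstar
      = (m : ℝ≥0∞) ∧
    (∀ ν : Measure Γ, IsProbabilityMeasure ν → μ ≪ ν →
      (m : ℝ≥0∞) ≤
        essSup (fun y => ENNReal.ofReal ((μ.rnDeriv ν y).toReal * ∑ j, φ j y ^ 2)) ν) := by
  set s : Γ → ℝ := fun y => ∑ j, φ j y ^ 2 with hs
  have hs_meas : Measurable s := by
    exact Finset.measurable_sum _ (fun j _ => (hmeas j).pow_const 2)
  have hs_nonneg : ∀ y, 0 ≤ s y := fun y =>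
    Finset.sum_nonneg fun j _ => sq_nonneg _
  have hs_int : Integrable s μ := integrable_finset_sum _ fun j _ => (hL2 j).integrable_sq
  have hm' : (0:ℝ) < m := Nat.cast_pos.mpr hm
  have hs_integral : ∫ y, s y ∂μ = m := by
    rw [hs]
    rw [integral_finset_sum _ fun j _ => (hL2 j).integrable_sq]
    have : ∀ j : Fin m, ∫ y, φ j y ^ 2 ∂μ = 1 := by
      intro j
      have := hortho j j
      simp only [if_pos rfl] at this
      simpa [sq] using this
    simp [this]
  -- lintegral of s equals m
  have hlint_s : ∫⁻ y, ENNReal.ofReal (s y) ∂μ = (m : ℝ≥0∞) := by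
    rw [← ofReal_integral_eq_lintegral_ofReal hs_int (Filter.Eventually.of_forall hs_nonneg),
      hs_integral]
    simp
  set f : Γ → ℝ≥0∞ := fun y => ENNReal.ofReal (s y / m) with hf
  have hf_meas : Measurable f := (hs_meas.div_const m).ennreal_ofReal
  -- probability measure
  have hprob : IsProbabilityMeasure νstar := by
    constructor
    rw [hνstar, withDensity_apply _ MeasurableSet.univ, Measure.restrict_univ]
    have : ∫⁻ y, ENNReal.ofReal (s y / m) ∂μ
        = ENNReal.ofReal (∫ y, s y / m ∂μ) := by
      rw [ofReal_integral_eq_lintegral_ofReal (hs_int.div_const m)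
        (Filter.Eventually.of_forall fun y => div_nonneg (hs_nonneg y) hm'.le)]
    rw [this, integral_div, hs_integral, div_self hm'.ne']
    simp
  set g : Γ → ℝ≥0∞ := fun y => ENNReal.ofReal ((m : ℝ) / s y) with hg
  have hg_meas : Measurable g := (measurable_const.div hs_meas).ennreal_ofReal
  -- μ = νstar.withDensity g
  have hback : νstar.withDensity g = μ := by
    rw [hνstar, ← withDensity_mul μ hf_meas hg_meas]
    have : (f * g) =ᵐ[μ] 1 := by
      filter_upwards [hpos] with y hy
      simp only [Pi.mul_apply, Pi.one_apply, hf, hg]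
      rw [← ENNReal.ofReal_mul (div_nonneg (hs_nonneg y) hm'.le)]
      rw [div_mul_div_comm, mul_comm, div_self (by positivity)]
      simp
    rw [withDensity_congr_ae this, withDensity_one]
  have hac : μ ≪ νstar := by
    rw [← hback]; exact withDensity_absolutelyContinuous _ _
  have hνac : νstar ≪ μ := by
    rw [hνstar]; exact withDensity_absolutelyContinuous _ _
  have hposν : ∀ᵐ y ∂νstar, 0 < s y := hνac.ae_le hpos
  -- rnDeriv
  have hrn : μ.rnDeriv νstar =ᵐ[νstar] g := by
    rw [← hback]
    exact Measure.rnDeriv_withDensity νstar hg_meas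
  have hk : (fun y => (μ.rnDeriv νstar y).toReal * s y) =ᵐ[νstar] fun _ => (m : ℝ) := by
    filter_upwards [hrn, hposν] with y hy hy'
    rw [hy]
    simp only [hg]
    rw [ENNReal.toReal_ofReal (div_nonneg hm'.le (hs_nonneg y))]
    · rw [div_mul_cancel₀ _ hy'.ne']
  have hess : essSup (fun y => ENNReal.ofReal ((μ.rnDeriv νstar y).toReal * s y)) νstar
      = (m : ℝ≥0∞) := by
    have : (fun y => ENNReal.ofReal ((μ.rnDeriv νstar y).toReal * s y))
        =ᵐ[νstar] fun _ => ENNReal.ofReal (m : ℝ) := by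
      filter_upwards [hk] with y hy; rw [hy]
    rw [essSup_congr_ae this, essSup_const]
    · simp
    · exact (IsProbabilityMeasure.ne_zero νstar)
  refine ⟨hprob, hac, ?_, hk, hess, ?_⟩
  · filter_upwards [hrn] with y hy; exact hy
  · intro ν hν hμν
    set F : Γ → ℝ≥0∞ := fun y => ENNReal.ofReal ((μ.rnDeriv ν y).toReal * s y) with hF
    have hFr : F =ᵐ[ν] fun y => μ.rnDeriv ν y * ENNReal.ofReal (s y) := by
      filter_upwards [Measure.rnDeriv_lt_top μ ν] with y hy
      show ENNReal.ofReal ((μ.rnDeriv ν y).toReal * s y) = _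
      rw [ENNReal.ofReal_mul ENNReal.toReal_nonneg, ENNReal.ofReal_toReal hy.ne]
    have hFint : ∫⁻ y, F y ∂ν = (m : ℝ≥0∞) := by
      rw [lintegral_congr_ae hFr]
      have := lintegral_withDensity_eq_lintegral_mul ν (μ.measurable_rnDeriv ν)
        hs_meas.ennreal_ofReal
      rw [Measure.withDensity_rnDeriv_eq μ ν hμν] at this
      simp only [Pi.mul_apply] at this
      rw [← this, hlint_s]
    calc (m : ℝ≥0∞) = ∫⁻ y, F y ∂ν := hFint.symm
      _ ≤ ∫⁻ _, essSup F ν ∂ν := lintegral_mono_ae (ae_le_essSup)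
      _ = essSup F ν := by simp

end
end

section
/- Let D be a nonempty set, let (ψ_j)_{j≥1} be real-valued functions on D, and let (ρ_j)_{j≥1} be positive numbers such that sup_{x∈D} ∑_{j≥1} ρ_j |ψ_j(x)| = K < ∞ and ∑_{j≥1} exp(−ρ_j²) < ∞. Let (Y_j)_{j≥1} be independent standard Gaussian random variables. Then almost surely sup_{x∈D} ∑_{j≥1} |Y_j ψ_j(x)| < ∞; in particular, almost surely the series b(x) := ∑_{j≥1} Y_j ψ_j(x) converges absolutely for every x ∈ D and sup_{x∈D} |b(x)| < ∞. -/
open MeasureTheory ProbabilityTheory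
open scoped ENNReal

noncomputable section

open Real in
lemma gauss_tail_aux (t : ℝ) (ht : 0 ≤ t) :
    gaussianReal 0 1 {y : ℝ | t < |y|} ≤ ENNReal.ofReal (2 * Real.exp (-(t ^ 2) / 4)) := by
  rw [gaussianReal_apply_eq_integral 0 one_ne_zero]
  apply ENNReal.ofReal_le_ofReal
  set s : Set ℝ := {y : ℝ | t < |y|} with hs
  have hmeas : MeasurableSet s := measurableSet_lt measurable_const (measurable_id.abs)
  set C : ℝ := (Real.sqrt (2 * π))⁻¹ * Real.exp (-(t ^ 2) / 4) with hC
  have hCpos : 0 < C := by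
    apply mul_pos (inv_pos.2 (Real.sqrt_pos.2 (by positivity))) (Real.exp_pos _)
  have hg_int : Integrable (fun y : ℝ => C * rexp (-(1/4) * y ^ 2)) := by
    exact (integrable_exp_neg_mul_sq (by norm_num : (0:ℝ) < 1/4)).const_mul _
  have hpt : ∀ y ∈ s, gaussianPDFReal 0 1 y ≤ C * rexp (-(1/4) * y ^ 2) := by
    intro y hy
    have hy' : t < |y| := hy
    have hsq : t ^ 2 ≤ y ^ 2 := by nlinarith [sq_abs y, abs_nonneg y]
    have : gaussianPDFReal 0 1 y = (Real.sqrt (2 * π))⁻¹ * rexp (-(y ^ 2) / 2) := by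
      simp [gaussianPDFReal]
    rw [this, hC, mul_assoc, ← Real.exp_add]
    apply mul_le_mul_of_nonneg_left _ (by positivity)
    apply Real.exp_le_exp.2
    nlinarith
  calc ∫ y in s, gaussianPDFReal 0 1 y
      ≤ ∫ y in s, C * rexp (-(1/4) * y ^ 2) :=
        setIntegral_mono_on ((integrable_gaussianPDFReal 0 1).integrableOn)
          hg_int.integrableOn hmeas hpt
    _ ≤ ∫ y, C * rexp (-(1/4) * y ^ 2) :=
        setIntegral_le_integral hg_int (Filter.Eventually.of_forall fun y => by positivity)
    _ = C * ∫ y, rexp (-(1/4) * y ^ 2) := integral_const_mul _ _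
    _ = C * Real.sqrt (π / (1/4)) := by rw [integral_gaussian]
    _ ≤ 2 * Real.exp (-(t ^ 2) / 4) := by
        have h1 : Real.sqrt (π / (1/4)) = Real.sqrt (4 * π) := by norm_num [mul_comm]; ring
        have h2 : Real.sqrt (4 * π) ≤ 2 * Real.sqrt (2 * π) := by
          have : (2:ℝ) * Real.sqrt (2 * π) = Real.sqrt (4 * (2 * π)) := by
            rw [Real.sqrt_mul (by norm_num : (0:ℝ) ≤ 4),
              show Real.sqrt 4 = 2 by
                rw [show (4:ℝ) = 2 ^ 2 by norm_num, Real.sqrt_sq (by norm_num : (0:ℝ) ≤ 2)]]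
          rw [this]
          exact Real.sqrt_le_sqrt (by nlinarith [pi_pos])
        have hsq2 : (0:ℝ) < Real.sqrt (2 * π) := Real.sqrt_pos.2 (by positivity)
        rw [hC, h1]
        rw [mul_assoc, mul_comm (Real.exp (-(t ^ 2) / 4)) (Real.sqrt (4 * π)),
          ← mul_assoc]
        apply mul_le_mul_of_nonneg_right _ (Real.exp_pos _).le
        rw [inv_mul_le_iff₀ hsq2]
        linarith

/-- if `sup_x ∑_j ρ_j |ψ_j(x)| = K < ∞` and `∑_j exp(−ρ_j²) < ∞`,
and `(Y_j)` are i.i.d. standard Gaussians, then almost surely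
`sup_x ∑_j |Y_j ψ_j(x)| < ∞`, the series converging absolutely for every `x`. -/
theorem lognormal_field_as_bounded
    {D : Type*} [Nonempty D] (ψ : ℕ → D → ℝ) (ρ : ℕ → ℝ) (hρ : ∀ j, 0 < ρ j)
    (K : ℝ) (hK : ∀ x, ∑' j, ENNReal.ofReal (ρ j * |ψ j x|) ≤ ENNReal.ofReal K)
    (hsum : Summable fun j => Real.exp (-ρ j ^ 2))
    {Ω : Type*} [MeasurableSpace Ω] (P : Measure Ω) [IsProbabilityMeasure P]
    (Y : ℕ → Ω → ℝ) (hYmeas : ∀ j, Measurable (Y j))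
    (hindep : iIndepFun Y P)
    (hdist : ∀ j, P.map (Y j) = gaussianReal 0 1) :
    ∀ᵐ ω ∂P, ∃ B : ℝ, ∀ x : D,
      Summable (fun j => |Y j ω * ψ j x|) ∧ ∑' j, |Y j ω * ψ j x| ≤ B := by
  set K' : ℝ := max K 0 with hK'
  have hK'0 : 0 ≤ K' := le_max_right _ _
  have hKK' : ENNReal.ofReal K ≤ ENNReal.ofReal K' := ENNReal.ofReal_le_ofReal (le_max_left _ _)
  -- each term is bounded by K'
  have hKx : ∀ x j, ρ j * |ψ j x| ≤ K' := by
    intro x j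
    have h1 : ENNReal.ofReal (ρ j * |ψ j x|) ≤ ENNReal.ofReal K' :=
      le_trans (le_trans (ENNReal.le_tsum j) (hK x)) hKK'
    exact (ENNReal.ofReal_le_ofReal_iff hK'0).1 h1
  -- real summability and bound of ∑ ρ_j |ψ_j x|
  have hne : ∀ x, ∑' j, ENNReal.ofReal (ρ j * |ψ j x|) ≠ ⊤ :=
    fun x => (lt_of_le_of_lt (hK x) ENNReal.ofReal_lt_top).ne
  have hsumx : ∀ x, Summable (fun j => ρ j * |ψ j x|) := by
    intro x
    exact (ENNReal.summable_toReal (hne x)).congr fun j =>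
      ENNReal.toReal_ofReal (mul_nonneg (hρ j).le (abs_nonneg _))
  have htsumx : ∀ x, ∑' j, ρ j * |ψ j x| ≤ K' := by
    intro x
    have heq : ∑' j, ρ j * |ψ j x| = (∑' j, ENNReal.ofReal (ρ j * |ψ j x|)).toReal := by
      rw [ENNReal.tsum_toReal_eq (fun _ => ENNReal.ofReal_ne_top)]
      exact tsum_congr fun j => (ENNReal.toReal_ofReal (mul_nonneg (hρ j).le (abs_nonneg _))).symm
    rw [heq]
    calc (∑' j, ENNReal.ofReal (ρ j * |ψ j x|)).toReal
        ≤ (ENNReal.ofReal K').toReal :=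
          ENNReal.toReal_mono ENNReal.ofReal_ne_top (le_trans (hK x) hKK')
      _ = K' := ENNReal.toReal_ofReal hK'0
  -- the bad events
  set s : ℕ → Set Ω := fun j => Y j ⁻¹' {y : ℝ | 2 * ρ j < |y|} with hsdef
  have hPs : ∀ j, P (s j) ≤ ENNReal.ofReal (2 * Real.exp (-ρ j ^ 2)) := by
    intro j
    have hmeas : MeasurableSet {y : ℝ | 2 * ρ j < |y|} :=
      measurableSet_lt measurable_const (measurable_id.abs)
    have : P (s j) = gaussianReal 0 1 {y : ℝ | 2 * ρ j < |y|} := by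
      rw [hsdef, ← Measure.map_apply (hYmeas j) hmeas, hdist j]
    rw [this]
    have := gauss_tail_aux (2 * ρ j) (by nlinarith [hρ j])
    convert this using 3
    ring
  have htop : ∑' j, P (s j) ≠ ⊤ := by
    have h1 : ∑' j, P (s j) ≤ ∑' j, ENNReal.ofReal (2 * Real.exp (-ρ j ^ 2)) :=
      ENNReal.tsum_le_tsum hPs
    have h2 : ∑' j, ENNReal.ofReal (2 * Real.exp (-ρ j ^ 2))
        = ENNReal.ofReal (∑' j, 2 * Real.exp (-ρ j ^ 2)) :=
      (ENNReal.ofReal_tsum_of_nonneg (fun _ => by positivity) (hsum.mul_left 2)).symm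
    exact (lt_of_le_of_lt (h1.trans h2.le) ENNReal.ofReal_lt_top).ne
  filter_upwards [ae_eventually_notMem htop] with ω hω
  obtain ⟨N, hN⟩ := Filter.eventually_atTop.1 hω
  have hbd : ∀ j, N ≤ j → |Y j ω| ≤ 2 * ρ j := by
    intro j hj
    have := hN j hj
    simp only [hsdef, Set.mem_preimage, Set.mem_setOf_eq, not_lt] at this
    exact this
  refine ⟨(∑ j ∈ Finset.range N, |Y j ω| * (K' / ρ j)) + 2 * K', fun x => ?_⟩
  set h : ℕ → ℝ := fun j => if j < N then |Y j ω| * (K' / ρ j) else 0 with hh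
  have hpt : ∀ j, |Y j ω * ψ j x| ≤ h j + 2 * (ρ j * |ψ j x|) := by
    intro j
    rw [abs_mul]
    by_cases hjN : j < N
    · have hψ : |ψ j x| ≤ K' / ρ j := (le_div_iff₀' (hρ j)).2 (hKx x j)
      have : |Y j ω| * |ψ j x| ≤ |Y j ω| * (K' / ρ j) :=
        mul_le_mul_of_nonneg_left hψ (abs_nonneg _)
      rw [hh]; simp only [if_pos hjN]
      nlinarith [mul_nonneg (hρ j).le (abs_nonneg (ψ j x))]
    · have hY : |Y j ω| ≤ 2 * ρ j := hbd j (not_lt.1 hjN)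
      have : |Y j ω| * |ψ j x| ≤ (2 * ρ j) * |ψ j x| :=
        mul_le_mul_of_nonneg_right hY (abs_nonneg _)
      rw [hh]; simp only [if_neg hjN]
      nlinarith
  have hh_summ : Summable h := by
    apply summable_of_ne_finset_zero (s := Finset.range N)
    intro j hj
    rw [hh]
    simp only [Finset.mem_range] at hj
    exact if_neg hj
  have h2_summ : Summable (fun j => 2 * (ρ j * |ψ j x|)) := (hsumx x).mul_left 2
  have hg_summ : Summable (fun j => h j + 2 * (ρ j * |ψ j x|)) := hh_summ.add h2_summ
  have habs : Summable (fun j => |Y j ω * ψ j x|) :=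
    Summable.of_nonneg_of_le (fun j => abs_nonneg _) hpt hg_summ
  refine ⟨habs, ?_⟩
  calc ∑' j, |Y j ω * ψ j x|
      ≤ ∑' j, (h j + 2 * (ρ j * |ψ j x|)) := Summable.tsum_le_tsum hpt habs hg_summ
    _ = (∑' j, h j) + ∑' j, 2 * (ρ j * |ψ j x|) := Summable.tsum_add hh_summ h2_summ
    _ = (∑' j, h j) + 2 * ∑' j, ρ j * |ψ j x| := by rw [tsum_mul_left]
    _ ≤ (∑ j ∈ Finset.range N, |Y j ω| * (K' / ρ j)) + 2 * K' := by
        have h1 : ∑' j, h j = ∑ j ∈ Finset.range N, h j := by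
          apply tsum_eq_sum
          intro j hj
          rw [hh]
          exact if_neg (by simpa using hj)
        have h2 : ∑ j ∈ Finset.range N, h j = ∑ j ∈ Finset.range N, |Y j ω| * (K' / ρ j) :=
          Finset.sum_congr rfl fun j hj => by
            rw [hh]; exact if_pos (Finset.mem_range.1 hj)
        rw [h1, h2]
        have := htsumx x
        linarith
end
end

section
/- Let D be a nonempty set, let (ψ_j)_{j≥1} be real-valued functions on D, and let (ρ_j)_{j≥1} be positive numbers such that sup_{x∈D} ∑_{j≥1} ρ_j |ψ_j(x)| = K < ∞ and ∑_{j≥1} exp(−ρ_j²) < ∞. Let (Y_j)_{j≥1} be independent standard Gaussian random variables and set B := sup_{x∈D} ∑_{j≥1} |Y_j ψ_j(x)| (which is finite almost surely). Then for every k < ∞ one has E[exp(k B)] < ∞. -/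
open MeasureTheory ProbabilityTheory
open scoped ENNReal

noncomputable section

open scoped NNReal

private lemma gauss_aux1 (g : ℝ → ℝ≥0∞) (hg : Measurable g) (C : ℝ) (hC : 0 ≤ C)
    (hb : ∀ y, g y ≤ ENNReal.ofReal (C * Real.exp (3/8 * y^2))) :
    ∫⁻ y, g y ∂(gaussianReal 0 1) < ⊤ := by
  rw [gaussianReal_of_var_ne_zero 0 one_ne_zero,
    lintegral_withDensity_eq_lintegral_mul _ (measurable_gaussianPDF 0 1) hg]
  have hpdf : ∀ y : ℝ, gaussianPDFReal 0 1 y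
      = (Real.sqrt (2*Real.pi))⁻¹ * Real.exp (-(1/2) * y^2) := by
    intro y
    unfold gaussianPDFReal
    push_cast
    rw [mul_one, sub_zero]
    ring_nf
  have hpt : ∀ y : ℝ, (gaussianPDF 0 1 * g) y ≤
      ENNReal.ofReal ((Real.sqrt (2*Real.pi))⁻¹ * C * Real.exp (-(1/8) * y^2)) := by
    intro y
    have h1 : (gaussianPDF 0 1 * g) y = gaussianPDF 0 1 y * g y := rfl
    rw [h1, gaussianPDF]
    have e : Real.exp (-(1/2)*y^2) * Real.exp (3/8*y^2) = Real.exp (-(1/8)*y^2) := by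
      rw [← Real.exp_add]; ring_nf
    calc ENNReal.ofReal (gaussianPDFReal 0 1 y) * g y
        ≤ ENNReal.ofReal (gaussianPDFReal 0 1 y) * ENNReal.ofReal (C * Real.exp (3/8 * y^2)) :=
          mul_le_mul_right (hb y) _
      _ = ENNReal.ofReal (gaussianPDFReal 0 1 y * (C * Real.exp (3/8 * y^2))) := by
          rw [ENNReal.ofReal_mul (gaussianPDFReal_nonneg 0 1 y)]
      _ ≤ ENNReal.ofReal ((Real.sqrt (2*Real.pi))⁻¹ * C * Real.exp (-(1/8) * y^2)) := by
          apply ENNReal.ofReal_le_ofReal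
          rw [hpdf y]
          apply le_of_eq
          rw [← e]
          ring
  calc ∫⁻ y, (gaussianPDF 0 1 * g) y ≤
      ∫⁻ y, ENNReal.ofReal ((Real.sqrt (2*Real.pi))⁻¹ * C * Real.exp (-(1/8) * y^2)) :=
        lintegral_mono hpt
    _ < ⊤ := by
        have hint : Integrable
            (fun y : ℝ => (Real.sqrt (2*Real.pi))⁻¹ * C * Real.exp (-(1/8) * y^2)) :=
          (integrable_exp_neg_mul_sq (by norm_num : (0:ℝ) < 1/8)).const_mul _
        exact hint.lintegral_lt_top

/-- under the assumptions of Statement 10, with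
`B := sup_x ∑_j |Y_j ψ_j(x)|` (finite almost surely), every exponential moment
of `B` is finite: `E[exp(k B)] < ∞` for all `k`. -/
theorem lognormal_field_exp_moments
    {D : Type*} [Nonempty D] (ψ : ℕ → D → ℝ) (ρ : ℕ → ℝ) (hρ : ∀ j, 0 < ρ j)
    (K : ℝ) (hK : ∀ x, ∑' j, ENNReal.ofReal (ρ j * |ψ j x|) ≤ ENNReal.ofReal K)
    (hsum : Summable fun j => Real.exp (-ρ j ^ 2))
    {Ω : Type*} [MeasurableSpace Ω] (P : Measure Ω) [IsProbabilityMeasure P]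
    (Y : ℕ → Ω → ℝ) (hYmeas : ∀ j, Measurable (Y j))
    (hindep : iIndepFun Y P)
    (hdist : ∀ j, P.map (Y j) = gaussianReal 0 1)
    (B : Ω → ℝ≥0∞)
    (hB : B = fun ω => ⨆ x : D, ∑' j, ENNReal.ofReal |Y j ω * ψ j x|) :
    ∀ k : ℝ, ∫⁻ ω, ENNReal.ofReal (Real.exp (k * (B ω).toReal)) ∂P < ⊤ := by
  intro k
  by_cases hk : k ≤ 0
  · -- trivial case: the integrand is at most 1
    calc ∫⁻ ω, ENNReal.ofReal (Real.exp (k * (B ω).toReal)) ∂P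
        ≤ ∫⁻ _, 1 ∂P := by
          apply lintegral_mono
          intro ω
          rw [show (1:ℝ≥0∞) = ENNReal.ofReal 1 by simp]
          exact ENNReal.ofReal_le_ofReal
            (Real.exp_le_one_iff.mpr (mul_nonpos_of_nonpos_of_nonneg hk ENNReal.toReal_nonneg))
      _ = 1 := by simp
      _ < ⊤ := ENNReal.one_lt_top
  push_neg at hk
  set K' : ℝ := max K 0 with hK'
  have hK'0 : 0 ≤ K' := le_max_right _ _
  set a : ℝ := k * K' with ha
  have ha0 : 0 ≤ a := mul_nonneg hk.le hK'0
  set m : ℝ := max 1 (2 * a) with hm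
  have hm0 : 0 < m := lt_of_lt_of_le one_pos (le_max_left _ _)
  -- choose N with ρ j ≥ m for j ≥ N
  obtain ⟨N, hN⟩ : ∃ N, ∀ j ≥ N, m ≤ ρ j := by
    have htend : Filter.Tendsto (fun j => Real.exp (-ρ j ^ 2)) Filter.atTop (nhds 0) :=
      hsum.tendsto_atTop_zero
    have hev : ∀ᶠ j in Filter.atTop, Real.exp (-ρ j ^ 2) < Real.exp (-m ^ 2) :=
      htend.eventually_lt_const (Real.exp_pos _)
    obtain ⟨N, hN⟩ := hev.exists_forall_of_atTop
    refine ⟨N, fun j hj => ?_⟩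
    have h1 := hN j hj
    have h2 : -ρ j ^ 2 < -m ^ 2 := by
      by_contra hcon
      push_neg at hcon
      exact absurd (Real.exp_le_exp.mpr hcon) (not_le.mpr h1)
    nlinarith [hρ j, hm0]
  -- the comparison functions
  set s : ℕ → Set ℝ := fun j => if j < N then Set.univ else {y : ℝ | 2 * ρ j ≤ |y|} with hs
  have hsmeas : ∀ j, MeasurableSet (s j) := by
    intro j
    simp only [hs]
    split_ifs
    · exact MeasurableSet.univ
    · exact measurableSet_le measurable_const continuous_abs.measurable
  set t : ℕ → ℝ → ℝ≥0∞ :=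
    fun j => (s j).indicator (fun y => ENNReal.ofReal (Real.exp (a * |y| / ρ j))) with ht
  have htmeas : ∀ j, Measurable (t j) := by
    intro j
    apply Measurable.indicator _ (hsmeas j)
    fun_prop
  -- the key pointwise bound
  have key : ∀ ω, ENNReal.ofReal (Real.exp (k * (B ω).toReal))
      ≤ ENNReal.ofReal (Real.exp (2 * a)) + ∑' j, t j (Y j ω) := by
    intro ω
    set S : ℝ≥0∞ := ⨆ j, ENNReal.ofReal (|Y j ω| / ρ j) with hSdef
    by_cases hStop : S = ⊤
    · -- the series on the right is infinite
      have hinf : Set.Infinite {j : ℕ | 2 * ρ j ≤ |Y j ω|} := by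
        by_contra hfin
        rw [Set.not_infinite] at hfin
        have hb : S ≤ (hfin.toFinset.sup fun j => ENNReal.ofReal (|Y j ω| / ρ j))
            ⊔ ENNReal.ofReal 2 := by
          apply iSup_le
          intro j
          by_cases hj : 2 * ρ j ≤ |Y j ω|
          · exact le_sup_of_le_left (Finset.le_sup (f := fun j => ENNReal.ofReal (|Y j ω| / ρ j)) (hfin.mem_toFinset.mpr hj))
          · push_neg at hj
            refine le_sup_of_le_right (ENNReal.ofReal_le_ofReal ?_)
            rw [div_le_iff₀ (hρ j)]
            linarith
        have hne : ((hfin.toFinset.sup fun j => ENNReal.ofReal (|Y j ω| / ρ j))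
            ⊔ ENNReal.ofReal 2) ≠ ⊤ := by
          apply ne_of_lt
          apply sup_lt_iff.mpr
          constructor
          · exact (Finset.sup_lt_iff (by simp)).mpr fun j _ => ENNReal.ofReal_lt_top
          · exact ENNReal.ofReal_lt_top
        exact hne (top_le_iff.mp (hStop ▸ hb))
      have htop : ∑' j, t j (Y j ω) = ⊤ := by
        rw [eq_top_iff]
        calc (⊤ : ℝ≥0∞) = ∑' (_ : {j : ℕ | 2 * ρ j ≤ |Y j ω|}), (1:ℝ≥0∞) := by
              have := hinf.to_subtype
              exact (ENNReal.tsum_const_eq_top_of_ne_zero one_ne_zero).symm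
          _ = ∑' j, Set.indicator {j : ℕ | 2 * ρ j ≤ |Y j ω|} (fun _ => (1:ℝ≥0∞)) j := by
              exact tsum_subtype {j : ℕ | 2 * ρ j ≤ |Y j ω|} (fun _ => (1:ℝ≥0∞))
          _ ≤ ∑' j, t j (Y j ω) := by
              apply ENNReal.tsum_le_tsum
              intro j
              by_cases hj : j ∈ {j : ℕ | 2 * ρ j ≤ |Y j ω|}
              · rw [Set.indicator_of_mem hj]
                have hmem : Y j ω ∈ s j := by
                  simp only [hs]
                  split_ifs
                  · trivial
                  · exact hj
                rw [ht]
                simp only [Set.indicator_of_mem hmem]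
                rw [show (1:ℝ≥0∞) = ENNReal.ofReal (Real.exp 0) by simp]
                exact ENNReal.ofReal_le_ofReal (Real.exp_le_exp.mpr
                  (div_nonneg (mul_nonneg ha0 (abs_nonneg _)) (hρ j).le))
              · rw [Set.indicator_of_notMem hj]
                exact zero_le
      rw [htop]
      simp
    · -- S is finite
      have hBle : B ω ≤ ENNReal.ofReal K' * S := by
        rw [hB]
        apply iSup_le
        intro x
        calc ∑' j, ENNReal.ofReal |Y j ω * ψ j x|
            ≤ ∑' j, S * ENNReal.ofReal (ρ j * |ψ j x|) := by
              apply ENNReal.tsum_le_tsum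
              intro j
              have habs : |Y j ω * ψ j x| = (|Y j ω| / ρ j) * (ρ j * |ψ j x|) := by
                rw [abs_mul, div_mul_eq_mul_div, eq_div_iff (hρ j).ne']
                ring
              rw [habs, ENNReal.ofReal_mul (div_nonneg (abs_nonneg _) (hρ j).le)]
              exact mul_le_mul_left (le_iSup (fun j => ENNReal.ofReal (|Y j ω| / ρ j)) j) _
          _ = S * ∑' j, ENNReal.ofReal (ρ j * |ψ j x|) := ENNReal.tsum_mul_left
          _ ≤ S * ENNReal.ofReal K := mul_le_mul_right (hK x) _
          _ ≤ ENNReal.ofReal K' * S := by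
              rw [mul_comm]
              exact mul_le_mul_left (ENNReal.ofReal_le_ofReal (le_max_left _ _)) _
      have hfin : ENNReal.ofReal K' * S ≠ ⊤ :=
        ENNReal.mul_ne_top ENNReal.ofReal_ne_top hStop
      have h2 : k * (B ω).toReal ≤ a * S.toReal := by
        have h3 : (B ω).toReal ≤ K' * S.toReal := by
          have h4 := ENNReal.toReal_mono hfin hBle
          rwa [ENNReal.toReal_mul, ENNReal.toReal_ofReal hK'0] at h4
        calc k * (B ω).toReal ≤ k * (K' * S.toReal) :=
            mul_le_mul_of_nonneg_left h3 hk.le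
          _ = a * S.toReal := by rw [ha]; ring
      refine le_trans (ENNReal.ofReal_le_ofReal (Real.exp_le_exp.mpr h2)) ?_
      by_cases hcase : a * S.toReal ≤ 2 * a
      · exact le_trans (ENNReal.ofReal_le_ofReal (Real.exp_le_exp.mpr hcase)) le_self_add
      · push_neg at hcase
        have hapos : 0 < a := by
          rcases lt_or_eq_of_le ha0 with h | h
          · exact h
          · exfalso; rw [← h] at hcase; simp at hcase
        have hS2 : 2 < S.toReal := by
          by_contra hcon
          push_neg at hcon
          nlinarith
        refine le_trans ?_ le_add_self
        apply ENNReal.le_of_forall_nnreal_lt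
        intro r hr
        rcases eq_or_ne r 0 with hr0 | hr0
        · rw [hr0]; simp
        have hrpos : (0:ℝ) < (r:ℝ) := by positivity
        have hr' : (r:ℝ) < Real.exp (a * S.toReal) := by
          rw [← ENNReal.ofReal_coe_nnreal, ENNReal.ofReal_lt_ofReal_iff (Real.exp_pos _)] at hr
          exact hr
        set u : ℝ := max (Real.log r / a) 2 with hu
        have hu2 : (2:ℝ) ≤ u := le_max_right _ _
        have huS : u < S.toReal := by
          apply max_lt
          · rw [div_lt_iff₀ hapos]
            have hll := Real.log_lt_log hrpos hr'
            rw [Real.log_exp] at hll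
            linarith [hll]
          · exact hS2
        obtain ⟨j, hj⟩ : ∃ j, u < |Y j ω| / ρ j := by
          by_contra hcon
          push_neg at hcon
          have hSle : S ≤ ENNReal.ofReal u :=
            iSup_le fun j => ENNReal.ofReal_le_ofReal (hcon j)
          have : S.toReal ≤ u := by
            have h5 := ENNReal.toReal_mono ENNReal.ofReal_ne_top hSle
            rwa [ENNReal.toReal_ofReal (by linarith : (0:ℝ) ≤ u)] at h5
          linarith
        have h2ρ : 2 * ρ j ≤ |Y j ω| := by
          have : (2:ℝ) < |Y j ω| / ρ j := lt_of_le_of_lt hu2 hj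
          rw [lt_div_iff₀ (hρ j)] at this
          linarith
        have hle : (r:ℝ) ≤ Real.exp (a * |Y j ω| / ρ j) := by
          have hlogu : Real.log r / a ≤ u := le_max_left _ _
          have hlog : Real.log r ≤ a * (|Y j ω| / ρ j) := by
            calc Real.log r = a * (Real.log r / a) := by field_simp
              _ ≤ a * u := mul_le_mul_of_nonneg_left hlogu ha0
              _ ≤ a * (|Y j ω| / ρ j) := mul_le_mul_of_nonneg_left hj.le ha0
          calc (r:ℝ) = Real.exp (Real.log r) := (Real.exp_log hrpos).symm
            _ ≤ Real.exp (a * |Y j ω| / ρ j) := by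
                apply Real.exp_le_exp.mpr
                rw [mul_div_assoc]
                exact hlog
        calc (r : ℝ≥0∞) ≤ t j (Y j ω) := by
              have hmem : Y j ω ∈ s j := by
                simp only [hs]
                split_ifs
                · trivial
                · exact h2ρ
              rw [ht]
              simp only [Set.indicator_of_mem hmem]
              rw [← ENNReal.ofReal_coe_nnreal]
              exact ENNReal.ofReal_le_ofReal hle
          _ ≤ ∑' j, t j (Y j ω) := ENNReal.le_tsum j
  -- bound the integral
  have hInt : ∫⁻ ω, ENNReal.ofReal (Real.exp (k * (B ω).toReal)) ∂P
      ≤ ENNReal.ofReal (Real.exp (2 * a)) + ∑' j, ∫⁻ ω, t j (Y j ω) ∂P := by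
    calc ∫⁻ ω, ENNReal.ofReal (Real.exp (k * (B ω).toReal)) ∂P
        ≤ ∫⁻ ω, (ENNReal.ofReal (Real.exp (2 * a)) + ∑' j, t j (Y j ω)) ∂P :=
          lintegral_mono key
      _ = ENNReal.ofReal (Real.exp (2 * a)) + ∫⁻ ω, ∑' j, t j (Y j ω) ∂P := by
          rw [lintegral_add_left measurable_const, lintegral_const, measure_univ, mul_one]
      _ = ENNReal.ofReal (Real.exp (2 * a)) + ∑' j, ∫⁻ ω, t j (Y j ω) ∂P := by
          rw [lintegral_tsum (f := fun j ω => t j (Y j ω))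
            fun j => ((htmeas j).comp (hYmeas j)).aemeasurable]
  -- identify the integrals with gaussian integrals
  have hIgauss : ∀ j, ∫⁻ ω, t j (Y j ω) ∂P = ∫⁻ y, t j y ∂(gaussianReal 0 1) := by
    intro j
    rw [← hdist j, lintegral_map (htmeas j) (hYmeas j)]
  -- each integral is finite
  have hIlt : ∀ j, ∫⁻ ω, t j (Y j ω) ∂P < ⊤ := by
    intro j
    rw [hIgauss j]
    apply gauss_aux1 (t j) (htmeas j) (Real.exp ((a / ρ j)^2)) (Real.exp_pos _).le
    intro y
    have hb1 : t j y ≤ ENNReal.ofReal (Real.exp (a * |y| / ρ j)) := by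
      rw [ht]
      exact Set.indicator_le_self _ _ y
    refine hb1.trans (ENNReal.ofReal_le_ofReal ?_)
    rw [← Real.exp_add]
    apply Real.exp_le_exp.mpr
    have hc : a * |y| / ρ j = (a / ρ j) * |y| := by ring
    rw [hc]
    nlinarith [sq_nonneg (a / ρ j - |y| / 2), sq_abs y, sq_nonneg y]
  -- tail bound for j ≥ N
  set c0 : ℝ≥0∞ := ∫⁻ y, ENNReal.ofReal (Real.exp (|y| / 2 + y^2 / 4)) ∂(gaussianReal 0 1)
    with hc0def
  have hc0lt : c0 < ⊤ := by
    rw [hc0def]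
    apply gauss_aux1 _ (by fun_prop) (Real.exp (1/2)) (Real.exp_pos _).le
    intro y
    apply ENNReal.ofReal_le_ofReal
    rw [← Real.exp_add]
    apply Real.exp_le_exp.mpr
    nlinarith [sq_nonneg (|y| - 2), sq_abs y]
  have htail : ∀ j, N ≤ j → ∫⁻ ω, t j (Y j ω) ∂P ≤ ENNReal.ofReal (Real.exp (-ρ j ^ 2)) * c0 := by
    intro j hj
    rw [hIgauss j, hc0def, ← lintegral_const_mul _ (by fun_prop)]
    apply lintegral_mono
    intro y
    by_cases hy : y ∈ s j
    · have hsj : s j = {y : ℝ | 2 * ρ j ≤ |y|} := by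
        rw [hs]; simp only [if_neg (not_lt.mpr hj)]
      have h2ρ : 2 * ρ j ≤ |y| := by rw [hsj] at hy; exact hy
      rw [ht]
      simp only [Set.indicator_of_mem hy]
      rw [← ENNReal.ofReal_mul (Real.exp_pos _).le, ← Real.exp_add]
      apply ENNReal.ofReal_le_ofReal
      apply Real.exp_le_exp.mpr
      have hρm : m ≤ ρ j := hN j hj
      have hρa : 2 * a ≤ ρ j := le_trans (le_max_right 1 (2*a)) hρm
      have hρ1 : 1 ≤ ρ j := le_trans (le_max_left 1 (2*a)) hρm
      have hstep1 : a * |y| / ρ j ≤ |y| / 2 := by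
        rw [div_le_iff₀ (hρ j)]
        have hy0 : (0:ℝ) ≤ |y| := abs_nonneg y
        nlinarith
      have hstep2 : (0:ℝ) ≤ -ρ j ^ 2 + y^2 / 4 := by
        have : 2 * ρ j ≤ |y| := h2ρ
        nlinarith [sq_abs y, hρ j]
      linarith
    · rw [ht]
      simp only [Set.indicator_of_notMem hy]
      exact zero_le
  -- sum up
  have hsumlt : ∑' j, ∫⁻ ω, t j (Y j ω) ∂P < ⊤ := by
    set I : ℕ → ℝ≥0∞ := fun j => ∫⁻ ω, t j (Y j ω) ∂P with hI
    have hsplit : ∀ j, I j ≤ (if j < N then I j else 0) + (if j < N then 0 else I j) := by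
      intro j; split_ifs <;> simp
    calc ∑' j, I j ≤ ∑' j, ((if j < N then I j else 0) + (if j < N then 0 else I j)) :=
          ENNReal.tsum_le_tsum hsplit
      _ = (∑' j, if j < N then I j else 0) + ∑' j, (if j < N then 0 else I j) :=
          ENNReal.tsum_add
      _ < ⊤ := by
          apply ENNReal.add_lt_top.mpr
          constructor
          · have heq : ∑' j, (if j < N then I j else 0) = ∑ j ∈ Finset.range N,
                (if j < N then I j else 0) := by
              apply tsum_eq_sum
              intro j hj
              rw [Finset.mem_range] at hj
              simp [hj]
            rw [heq]
            apply ENNReal.sum_lt_top.mpr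
            intro j _
            split_ifs
            · exact hIlt j
            · exact ENNReal.zero_lt_top
          · calc ∑' j, (if j < N then 0 else I j)
                ≤ ∑' j, ENNReal.ofReal (Real.exp (-ρ j ^ 2)) * c0 := by
                  apply ENNReal.tsum_le_tsum
                  intro j
                  split_ifs with hj
                  · exact zero_le
                  · exact htail j (not_lt.mp hj)
              _ = (∑' j, ENNReal.ofReal (Real.exp (-ρ j ^ 2))) * c0 := ENNReal.tsum_mul_right
              _ = ENNReal.ofReal (∑' j, Real.exp (-ρ j ^ 2)) * c0 := by
                  rw [ENNReal.ofReal_tsum_of_nonneg (fun j => (Real.exp_pos _).le) hsum]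
              _ < ⊤ := ENNReal.mul_lt_top ENNReal.ofReal_lt_top hc0lt
  calc ∫⁻ ω, ENNReal.ofReal (Real.exp (k * (B ω).toReal)) ∂P
      ≤ ENNReal.ofReal (Real.exp (2 * a)) + ∑' j, ∫⁻ ω, t j (Y j ω) ∂P := hInt
    _ < ⊤ := ENNReal.add_lt_top.mpr ⟨ENNReal.ofReal_lt_top, hsumlt⟩

end
end
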